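/- Let Ω₁ := B(0,1) ∖ {(x,0) : 0 ≤ x ≤ 1} ⊆ ℝ² (the open unit disc with a radial slit removed). Then Ω₁ satisfies the D₀-John condition for some D₀ ≥ 1 (one may take the John point X₀ = (0, −1/2)), but Ω₁ does not satisfy the local D₀-John condition for any D₀ ≥ 1. -/

import Mathlib

open Set Metric MeasureTheory
open scoped ENNReal NNReal

noncomputable section

/-- Euclidean space `ℝ^m`. -/
abbrev Euc (m : ℕ) : Type := EuclideanSpace ℝ (Fin m)

variable {m : ℕ}

/-- `E ⊆ ℝ^m` is `d`-Ahlfors–David regular: `E` is closed and there is `D ≥ 1` with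
`D⁻¹ rᵈ ≤ ℋᵈ(B(x,r) ∩ E) ≤ D rᵈ` for all `x ∈ E` and `0 < r < diam E`. -/
def IsADR (d : ℝ) (E : Set (Euc m)) : Prop :=
  IsClosed E ∧ ∃ D : ℝ, 1 ≤ D ∧ ∀ x ∈ E, ∀ r : ℝ, 0 < r →
    ENNReal.ofReal r < EMetric.diam E →
      ENNReal.ofReal (r ^ d / D) ≤ μH[d] (ball x r ∩ E) ∧
        μH[d] (ball x r ∩ E) ≤ ENNReal.ofReal (D * r ^ d)

/-- The corkscrew condition for `Ω` with constant `c ∈ (0,1)`: for every `x ∈ ∂Ω` and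
`0 < r < diam ∂Ω` there is `X ∈ Ω` with `B(X, c·r) ⊆ B(x,r) ∩ Ω`. -/
def CorkscrewWith (Ω : Set (Euc m)) (c : ℝ) : Prop :=
  ∀ x ∈ frontier Ω, ∀ r : ℝ, 0 < r → ENNReal.ofReal r < EMetric.diam (frontier Ω) →
    ∃ X ∈ Ω, ball X (c * r) ⊆ ball x r ∩ Ω

/-- The corkscrew condition (for some constant `c ∈ (0,1)`). -/
def Corkscrew (Ω : Set (Euc m)) : Prop := ∃ c : ℝ, 0 < c ∧ c < 1 ∧ CorkscrewWith Ω c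

/-- The 2-sided corkscrew condition: both `Ω` and `int (Ωᶜ)` satisfy the corkscrew condition. -/
def TwoSidedCorkscrew (Ω : Set (Euc m)) : Prop :=
  Corkscrew Ω ∧ Corkscrew (interior Ωᶜ)

/-- The distance between two sets. -/
def distSet (s t : Set (Euc m)) : ℝ := sInf {d : ℝ | ∃ x ∈ s, ∃ y ∈ t, d = dist x y}

/-- A path in `Ω`: a continuous map `γ : [0,1] → closure Ω` with `γ(t) ∈ Ω` for `t ∈ (0,1]`. -/
def IsPathIn (Ω : Set (Euc m)) (γ : ℝ → Euc m) : Prop :=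
  ContinuousOn γ (Icc 0 1) ∧ (∀ t ∈ Icc (0:ℝ) 1, γ t ∈ closure Ω) ∧
    ∀ t ∈ Ioc (0:ℝ) 1, γ t ∈ Ω

/-- The length (total variation) of a path `γ : [0,1] → ℝ^m`. -/
def pathLen (γ : ℝ → Euc m) : ℝ≥0∞ := eVariationOn γ (Icc 0 1)

/-- A `D`-non-tangential path in `Ω`: a path in `Ω` such that for every `t ∈ [0,1]` the length of
`γ` restricted to `[0,t]` is at most `D · dist(γ t, ∂Ω)`. -/
def IsNTPath (Ω : Set (Euc m)) (D : ℝ) (γ : ℝ → Euc m) : Prop :=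
  IsPathIn Ω γ ∧ ∀ t ∈ Icc (0:ℝ) 1,
    eVariationOn γ (Icc 0 t) ≤ ENNReal.ofReal (D * infDist (γ t) (frontier Ω))

/-- The `D₀`-John condition: there is `X₀ ∈ Ω` such that every `Y ∈ Ω` can be joined to `X₀` by a
`D₀`-non-tangential path in `Ω` from `Y` to `X₀`. -/
def JohnWith (Ω : Set (Euc m)) (D₀ : ℝ) : Prop :=
  ∃ X₀ ∈ Ω, ∀ Y ∈ Ω, ∃ γ : ℝ → Euc m, IsNTPath Ω D₀ γ ∧ γ 0 = Y ∧ γ 1 = X₀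

/-- The local `(D₀, R₀)`-John condition: for every `x ∈ ∂Ω` and `0 < r < R₀` there is a local John
point `Y ∈ B(x,r) ∩ Ω` with `B(Y, r/D₀) ⊆ Ω` such that every `z ∈ B(x,r) ∩ ∂Ω` can be joined to
`Y` by a `D₀`-non-tangential path in `Ω` of length at most `D₀ r`. -/
def LocalJohnWithin (Ω : Set (Euc m)) (D₀ R₀ : ℝ) : Prop :=
  ∀ x ∈ frontier Ω, ∀ r : ℝ, 0 < r → r < R₀ →
    ∃ Y ∈ ball x r ∩ Ω, ball Y (r / D₀) ⊆ Ω ∧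
      ∀ z ∈ ball x r ∩ frontier Ω, ∃ γ : ℝ → Euc m,
        IsNTPath Ω D₀ γ ∧ γ 0 = z ∧ γ 1 = Y ∧ pathLen γ ≤ ENNReal.ofReal (D₀ * r)

/-- The local `D₀`-John condition (i.e. the local `(D₀, diam ∂Ω)`-John condition). -/
def LocalJohnWith (Ω : Set (Euc m)) (D₀ : ℝ) : Prop :=
  ∀ x ∈ frontier Ω, ∀ r : ℝ, 0 < r → ENNReal.ofReal r < EMetric.diam (frontier Ω) →
    ∃ Y ∈ ball x r ∩ Ω, ball Y (r / D₀) ⊆ Ω ∧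
      ∀ z ∈ ball x r ∩ frontier Ω, ∃ γ : ℝ → Euc m,
        IsNTPath Ω D₀ γ ∧ γ 0 = z ∧ γ 1 = Y ∧ pathLen γ ≤ ENNReal.ofReal (D₀ * r)

/-- The weak local `D₀`-John condition, with surface measure `ℋᵈ` on `∂Ω`. -/
def WeakLocalJohnWith (d : ℝ) (Ω : Set (Euc m)) (D₀ : ℝ) : Prop :=
  ∃ θ : ℝ, 0 < θ ∧ θ ≤ 1 ∧ ∃ R : ℝ, 2 ≤ R ∧ ∀ X ∈ Ω,
    ∃ F : Set (Euc m), MeasurableSet F ∧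
      F ⊆ ball X (R * infDist X (frontier Ω)) ∩ frontier Ω ∧
      ENNReal.ofReal θ * μH[d] (ball X (R * infDist X (frontier Ω)) ∩ frontier Ω) ≤ μH[d] F ∧
      ∀ z ∈ F, ∃ γ : ℝ → Euc m, IsNTPath Ω D₀ γ ∧ γ 0 = z ∧ γ 1 = X ∧
        pathLen γ ≤ ENNReal.ofReal (D₀ * (R * infDist X (frontier Ω)))

/-- The Harnack chain condition: there are `C ≥ 1` and `M : ℝ → ℕ` such that any `X, X' ∈ Ω` with
`δ(X), δ(X') ≥ ρ` and `|X - X'| < Λ ρ` can be joined by a chain of at most `M Λ` open balls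
contained in `Ω`, consecutive balls intersecting, with `C⁻¹ diam Bₖ ≤ dist(Bₖ, ∂Ω) ≤ C diam Bₖ`. -/
def HarnackChain (Ω : Set (Euc m)) : Prop :=
  ∃ C : ℝ, 1 ≤ C ∧ ∃ M : ℝ → ℕ,
    ∀ ρ : ℝ, 0 < ρ → ∀ Λ : ℝ, 1 ≤ Λ → ∀ X ∈ Ω, ∀ X' ∈ Ω,
      ρ ≤ infDist X (frontier Ω) → ρ ≤ infDist X' (frontier Ω) → dist X X' < Λ * ρ →
      ∃ N : ℕ, 1 ≤ N ∧ N ≤ M Λ ∧ ∃ ctr : ℕ → Euc m, ∃ rad : ℕ → ℝ,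
        X ∈ ball (ctr 0) (rad 0) ∧ X' ∈ ball (ctr (N - 1)) (rad (N - 1)) ∧
        (∀ k < N, ball (ctr k) (rad k) ⊆ Ω) ∧
        (∀ k, k + 1 < N → (ball (ctr k) (rad k) ∩ ball (ctr (k + 1)) (rad (k + 1))).Nonempty) ∧
        (∀ k < N,
          C⁻¹ * Metric.diam (ball (ctr k) (rad k))
              ≤ distSet (ball (ctr k) (rad k)) (frontier Ω) ∧
            distSet (ball (ctr k) (rad k)) (frontier Ω)
              ≤ C * Metric.diam (ball (ctr k) (rad k)))

/-- A domain (connected open set) is NTA if it satisfies the Harnack chain condition and the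
2-sided corkscrew condition. -/
def IsNTA (Θ : Set (Euc m)) : Prop :=
  IsOpen Θ ∧ IsConnected Θ ∧ HarnackChain Θ ∧ TwoSidedCorkscrew Θ

/-- `Ω` is a chord-arc domain: NTA with `d`-ADR boundary. -/
def IsCAD (d : ℝ) (Ω : Set (Euc m)) : Prop := IsNTA Ω ∧ IsADR d (frontier Ω)

/-- `Ω` is a 2-sided chord-arc domain: a chord-arc domain such that `int (Ωᶜ)` is NTA. -/
def IsTwoSidedCAD (d : ℝ) (Ω : Set (Euc m)) : Prop := IsCAD d Ω ∧ IsNTA (interior Ωᶜ)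

/-- `E`, with the Euclidean metric, is quasiconvex: any two points of `E` can be joined by a path
in `E` of length at most `C` times their distance. -/
def QuasiconvexSet (E : Set (Euc m)) : Prop :=
  ∃ C : ℝ, 1 ≤ C ∧ ∀ x ∈ E, ∀ y ∈ E, ∃ γ : ℝ → Euc m,
    ContinuousOn γ (Icc 0 1) ∧ (∀ t ∈ Icc (0:ℝ) 1, γ t ∈ E) ∧ γ 0 = x ∧ γ 1 = y ∧
      eVariationOn γ (Icc 0 1) ≤ ENNReal.ofReal (C * dist x y)

/-- `E`, with the Euclidean metric, is annularly quasiconvex. -/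
def AnnularlyQuasiconvexSet (E : Set (Euc m)) : Prop :=
  ∃ C : ℝ, 1 ≤ C ∧ ∀ z ∈ E, ∀ r : ℝ, 0 < r →
    ENNReal.ofReal (C * r) < EMetric.diam E →
    ∀ x ∈ E ∩ (ball z (2 * r) \ ball z r), ∀ y ∈ E ∩ (ball z (2 * r) \ ball z r),
      ∃ γ : ℝ → Euc m, ContinuousOn γ (Icc 0 1) ∧
        (∀ t ∈ Icc (0:ℝ) 1, γ t ∈ E ∩ (ball z (C * r) \ ball z (r / C))) ∧
        γ 0 = x ∧ γ 1 = y ∧ eVariationOn γ (Icc 0 1) ≤ ENNReal.ofReal (C * dist x y)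

/-- `ρ` is an upper gradient of `f` on `E`: for every `1`-Lipschitz curve `γ : [0,L] → E` we have
`|f(γ 0) - f(γ L)| ≤ ∫₀ᴸ ρ(γ t) dt`. -/
def IsUpperGradientOn (f : Euc m → ℝ) (ρ : Euc m → ℝ≥0∞) (E : Set (Euc m)) : Prop :=
  ∀ L : ℝ, 0 ≤ L → ∀ γ : ℝ → Euc m, LipschitzOnWith 1 γ (Icc 0 L) →
    (∀ t ∈ Icc (0:ℝ) L, γ t ∈ E) →
    ENNReal.ofReal |f (γ 0) - f (γ L)| ≤ ∫⁻ t in Icc (0:ℝ) L, ρ (γ t)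

/-- `ϱ` is admissible for the pair `(E,F)` in `S`: `∫_γ ϱ ds ≥ 1` for every rectifiable
(`1`-Lipschitz parametrized) path in `S` connecting `E` and `F`. -/
def AdmissibleFor (S E F : Set (Euc m)) (ϱ : Euc m → ℝ≥0∞) : Prop :=
  ∀ L : ℝ, 0 < L → ∀ γ : ℝ → Euc m, LipschitzOnWith 1 γ (Icc 0 L) →
    (∀ t ∈ Icc (0:ℝ) L, γ t ∈ S) → γ 0 ∈ E → γ L ∈ F →
    1 ≤ ∫⁻ t in Icc (0:ℝ) L, ϱ (γ t)

/-- The `d`-modulus of the family of paths in `S` connecting `E` and `F`, w.r.t. measure `σ`. -/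
def modOn (σ : Measure (Euc m)) (S E F : Set (Euc m)) (d : ℝ) : ℝ≥0∞ :=
  sInf {v : ℝ≥0∞ | ∃ ϱ : Euc m → ℝ≥0∞, Measurable ϱ ∧ AdmissibleFor S E F ϱ ∧
    v = ∫⁻ x, ϱ x ^ d ∂σ}

/-- `L` is an affine hyperplane (affine subspace of codimension 1) of `ℝ^m`. -/
def IsAffineHyperplane (L : Set (Euc m)) : Prop :=
  ∃ A : AffineSubspace ℝ (Euc m), (A : Set (Euc m)) = L ∧
    Module.finrank ℝ A.direction + 1 = m

/-- The bilateral β-number `bβ_{∂Ω}(B(x,r), L)`. -/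
def bBeta (Ω : Set (Euc m)) (x : Euc m) (r : ℝ) (L : Set (Euc m)) : ℝ :=
  sSup ((fun y => infDist y L / r) '' (ball x r ∩ frontier Ω)) +
    sSup ((fun Y => infDist Y (frontier Ω) / r) '' (L ∩ ball x r))

/-- The open `c`-neighborhood `U_c(L)` of `L`. -/
def tubeNbhd (L : Set (Euc m)) (c : ℝ) : Set (Euc m) := {Y | infDist Y L < c}

/-- The slit `{(x,0) : 0 ≤ x ≤ 1} ⊆ ℝ²`. -/
def slitSeg : Set (Euc 2) := {p : Euc 2 | p 1 = 0 ∧ 0 ≤ p 0 ∧ p 0 ≤ 1}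

/-- The slit disc `Ω₁ := B(0,1) ∖ {(x,0) : 0 ≤ x ≤ 1}`. -/
def slitDisc : Set (Euc 2) := ball (0 : Euc 2) 1 \ slitSeg

namespace SlitAux

def pt (a b : ℝ) : Euc 2 :=
  a • EuclideanSpace.single (0 : Fin 2) (1:ℝ) + b • EuclideanSpace.single (1 : Fin 2) (1:ℝ)

@[simp] lemma pt_apply0 (a b : ℝ) : pt a b 0 = a := by
  simp [pt, PiLp.add_apply, PiLp.smul_apply, EuclideanSpace.single_apply]

@[simp] lemma pt_apply1 (a b : ℝ) : pt a b 1 = b := by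
  simp [pt, PiLp.add_apply, PiLp.smul_apply, EuclideanSpace.single_apply]

lemma euc_ext {p q : Euc 2} (h0 : p 0 = q 0) (h1 : p 1 = q 1) : p = q := by
  ext i
  fin_cases i
  · exact h0
  · exact h1

lemma dist_sq (p q : Euc 2) : dist p q ^ 2 = (p 0 - q 0) ^ 2 + (p 1 - q 1) ^ 2 := by
  rw [EuclideanSpace.dist_eq, Real.sq_sqrt (by positivity)]
  simp [Fin.sum_univ_two, Real.dist_eq, sq_abs]

lemma norm_sq (p : Euc 2) : ‖p‖ ^ 2 = p 0 ^ 2 + p 1 ^ 2 := by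
  have h := dist_sq p 0
  rw [dist_zero_right] at h
  simpa [PiLp.zero_apply] using h

lemma dist_le_of_sq {p q : Euc 2} {r : ℝ} (hr : 0 ≤ r)
    (h : (p 0 - q 0) ^ 2 + (p 1 - q 1) ^ 2 ≤ r ^ 2) : dist p q ≤ r := by
  nlinarith [dist_sq p q, dist_nonneg (x := p) (y := q)]

lemma dist_lt_of_sq {p q : Euc 2} {r : ℝ} (hr : 0 ≤ r)
    (h : (p 0 - q 0) ^ 2 + (p 1 - q 1) ^ 2 < r ^ 2) : dist p q < r := by
  nlinarith [dist_sq p q, dist_nonneg (x := p) (y := q)]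

lemma le_dist_of_sq {p q : Euc 2} {r : ℝ} (hr : 0 ≤ r)
    (h : r ^ 2 ≤ (p 0 - q 0) ^ 2 + (p 1 - q 1) ^ 2) : r ≤ dist p q := by
  nlinarith [dist_sq p q, dist_nonneg (x := p) (y := q)]

lemma abs_coord0_le_dist (p q : Euc 2) : |p 0 - q 0| ≤ dist p q := by
  have h := dist_sq p q
  have h0 := dist_nonneg (x := p) (y := q)
  nlinarith [sq_nonneg (p 1 - q 1), sq_abs (p 0 - q 0), abs_nonneg (p 0 - q 0)]

lemma abs_coord1_le_dist (p q : Euc 2) : |p 1 - q 1| ≤ dist p q := by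
  have h := dist_sq p q
  have h0 := dist_nonneg (x := p) (y := q)
  nlinarith [sq_nonneg (p 0 - q 0), sq_abs (p 1 - q 1), abs_nonneg (p 1 - q 1)]

lemma abs_coord0_le_norm (p : Euc 2) : |p 0| ≤ ‖p‖ := by
  have h := abs_coord0_le_dist p 0
  rw [dist_zero_right] at h
  simpa [PiLp.zero_apply] using h

lemma abs_coord1_le_norm (p : Euc 2) : |p 1| ≤ ‖p‖ := by
  have h := abs_coord1_le_dist p 0
  rw [dist_zero_right] at h
  simpa [PiLp.zero_apply] using h

lemma mem_slitDisc_iff {p : Euc 2} :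
    p ∈ slitDisc ↔ ‖p‖ < 1 ∧ ¬(p 1 = 0 ∧ 0 ≤ p 0 ∧ p 0 ≤ 1) := by
  rw [slitDisc, mem_diff, mem_ball_zero_iff]
  exact Iff.rfl

lemma isClosed_slitSeg : IsClosed slitSeg := by
  have h0 : Continuous fun p : Euc 2 => p 0 := (EuclideanSpace.proj (0 : Fin 2)).continuous
  have h1 : Continuous fun p : Euc 2 => p 1 := (EuclideanSpace.proj (1 : Fin 2)).continuous
  have : slitSeg = (fun p : Euc 2 => p 1) ⁻¹' {0} ∩ (fun p : Euc 2 => p 0) ⁻¹' (Icc 0 1) := by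
    ext p
    simp only [slitSeg, mem_setOf_eq, mem_inter_iff, mem_preimage, mem_singleton_iff, mem_Icc]
  rw [this]
  exact (isClosed_singleton.preimage h1).inter (isClosed_Icc.preimage h0)

lemma isOpen_slitDisc : IsOpen slitDisc := isOpen_ball.sdiff isClosed_slitSeg

lemma closure_slitDisc : closure slitDisc = closedBall (0 : Euc 2) 1 := by
  apply le_antisymm
  · calc closure slitDisc ⊆ closure (ball (0 : Euc 2) 1) := closure_mono diff_subset
      _ ⊆ closedBall (0 : Euc 2) 1 := closure_ball_subset_closedBall
  · intro p hp
    rw [mem_closedBall, dist_zero_right] at hp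
    rw [Metric.mem_closure_iff]
    intro ε hε
    set θ : ℝ := min ε 1 / 2 with hθdef
    have hθpos : 0 < θ := by positivity
    have hθle : θ ≤ 1 / 2 := by
      rw [hθdef]
      have : min ε 1 ≤ 1 := min_le_right _ _
      linarith
    have hθε : (3 / 2) * θ < ε := by
      rcases le_total ε 1 with h | h
      · rw [hθdef, min_eq_left h]; linarith
      · rw [hθdef, min_eq_right h]; linarith
    set s : ℝ := if p 1 ≤ 0 then -(1:ℝ) else 1 with hs
    set q : Euc 2 := (1 - θ) • p + (s * θ / 2) • EuclideanSpace.single (1 : Fin 2) (1:ℝ) with hq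
    have hq0 : q 0 = (1 - θ) * p 0 := by
      simp [hq, PiLp.add_apply, PiLp.smul_apply, EuclideanSpace.single_apply]
    have hq1 : q 1 = (1 - θ) * p 1 + s * θ / 2 := by
      simp only [hq, PiLp.add_apply, PiLp.smul_apply, EuclideanSpace.single_apply,
        if_pos rfl, smul_eq_mul]
      ring_nf
      simp [mul_comm]
    have hq1ne : q 1 ≠ 0 := by
      rw [hq1, hs]
      split_ifs with hsgn
      · have : (1 - θ) * p 1 ≤ 0 := mul_nonpos_of_nonneg_of_nonpos (by linarith) hsgn
        nlinarith
      · push_neg at hsgn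
        have : 0 ≤ (1 - θ) * p 1 := mul_nonneg (by linarith) (le_of_lt hsgn)
        nlinarith
    have habs : |s| = 1 := by
      rw [hs]; split_ifs <;> simp
    have hqnorm : ‖q‖ < 1 := by
      calc ‖q‖ ≤ ‖(1 - θ) • p‖ + ‖(s * θ / 2) • EuclideanSpace.single (1 : Fin 2) (1:ℝ)‖ :=
            norm_add_le _ _
        _ = |1 - θ| * ‖p‖ + |s * θ / 2| * 1 := by
            rw [norm_smul, norm_smul, Real.norm_eq_abs, Real.norm_eq_abs,
              EuclideanSpace.norm_single, norm_one]
        _ ≤ (1 - θ) * 1 + θ / 2 := by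
            have h1 : |1 - θ| = 1 - θ := abs_of_nonneg (by linarith)
            have h2 : |s * θ / 2| = θ / 2 := by
              rw [abs_div, abs_mul, habs]
              simp [abs_of_nonneg hθpos.le]
            rw [h1, h2, mul_one]
            have hle : (1 - θ) * ‖p‖ ≤ (1 - θ) * 1 :=
              mul_le_mul_of_nonneg_left hp (by linarith)
            linarith
        _ < 1 := by linarith
    refine ⟨q, ?_, ?_⟩
    · rw [mem_slitDisc_iff]
      exact ⟨hqnorm, fun hc => hq1ne hc.1⟩
    · have : p - q = θ • p - (s * θ / 2) • EuclideanSpace.single (1 : Fin 2) (1:ℝ) := by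
        rw [hq]; module
      calc dist p q = ‖p - q‖ := by rw [dist_eq_norm]
        _ ≤ ‖θ • p‖ + ‖(s * θ / 2) • EuclideanSpace.single (1 : Fin 2) (1:ℝ)‖ := by
            rw [this]; exact norm_sub_le _ _
        _ ≤ θ * 1 + θ / 2 := by
            rw [norm_smul, norm_smul, Real.norm_eq_abs, Real.norm_eq_abs,
              EuclideanSpace.norm_single, norm_one]
            have h2 : |s * θ / 2| = θ / 2 := by
              rw [abs_div, abs_mul, habs]
              simp [abs_of_nonneg hθpos.le]
            rw [h2, abs_of_nonneg hθpos.le, mul_one]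
            nlinarith [mul_le_mul_of_nonneg_left hp hθpos.le]
        _ < ε := by linarith

lemma frontier_slitDisc : frontier slitDisc = closedBall (0 : Euc 2) 1 \ slitDisc := by
  rw [frontier, closure_slitDisc, isOpen_slitDisc.interior_eq]

lemma mem_frontier_of_norm_one {z : Euc 2} (hz : ‖z‖ = 1) : z ∈ frontier slitDisc := by
  rw [frontier_slitDisc, mem_diff, mem_closedBall, dist_zero_right, hz]
  refine ⟨le_refl _, fun hc => ?_⟩
  have := hc.1
  rw [mem_ball_zero_iff, hz] at this
  exact lt_irrefl _ this

lemma slit_mem_frontier {a : ℝ} (h0 : 0 ≤ a) (h1 : a ≤ 1) : pt a 0 ∈ frontier slitDisc := by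
  rw [frontier_slitDisc, mem_diff, mem_closedBall, dist_zero_right]
  constructor
  · have : ‖pt a 0‖ ^ 2 = a ^ 2 := by rw [norm_sq]; simp
    nlinarith [norm_nonneg (pt a 0)]
  · intro hc
    exact hc.2 ⟨by simp, by simp [h0], by simp [h1]⟩

lemma frontier_slitDisc_nonempty : (frontier slitDisc).Nonempty :=
  ⟨pt 1 0, slit_mem_frontier zero_le_one le_rfl⟩

lemma infDist_frontier_ge {Z : Euc 2} {ρ : ℝ}
    (h : ∀ w : Euc 2, dist w Z < ρ → w ∈ slitDisc) :
    ρ ≤ infDist Z (frontier slitDisc) := by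
  by_contra hc
  push_neg at hc
  obtain ⟨y, hy, hyd⟩ := (infDist_lt_iff frontier_slitDisc_nonempty).1 hc
  have hmem : y ∈ slitDisc := h y (by rwa [dist_comm])
  rw [frontier_slitDisc, mem_diff] at hy
  exact hy.2 hmem

lemma eVar_le_of_lipschitz {γ : ℝ → Euc 2} {K : ℝ≥0} {t : ℝ}
    (h : LipschitzOnWith K γ (Icc 0 t)) :
    eVariationOn γ (Icc 0 t) ≤ ENNReal.ofReal (K * t) := by
  rcases le_or_gt 0 t with ht | ht
  · have h1 : eVariationOn (γ ∘ id) (Icc 0 t) ≤ (K : ℝ≥0∞) * eVariationOn id (Icc 0 t) :=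
      h.comp_eVariationOn_le (mapsTo_id _)
    have h2 : eVariationOn (id : ℝ → ℝ) (Icc 0 t) ≤ ENNReal.ofReal (t - 0) := by
      have := (monotoneOn_id (s := Icc (0:ℝ) t)).eVariationOn_le
        (a := 0) (b := t) (by simp [ht]) (by simp [ht])
      simpa using this
    calc eVariationOn γ (Icc 0 t) = eVariationOn (γ ∘ id) (Icc 0 t) := rfl
      _ ≤ (K : ℝ≥0∞) * eVariationOn id (Icc 0 t) := h1
      _ ≤ (K : ℝ≥0∞) * ENNReal.ofReal (t - 0) := by
          exact mul_le_mul_right h2 _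
      _ = ENNReal.ofReal (K * t) := by
          rw [← ENNReal.ofReal_coe_nnreal, ← ENNReal.ofReal_mul K.coe_nonneg, sub_zero]
  · have : Icc (0:ℝ) t = ∅ := Icc_eq_empty_of_lt ht
    rw [this]
    simp [eVariationOn.subsingleton γ subsingleton_empty]

lemma lipschitzOnWith_glue {f : ℝ → Euc 2} {K : ℝ≥0} {a b c : ℝ}
    (hab : a ≤ b) (hbc : b ≤ c)
    (h1 : LipschitzOnWith K f (Icc a b)) (h2 : LipschitzOnWith K f (Icc b c)) :
    LipschitzOnWith K f (Icc a c) := by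
  rw [lipschitzOnWith_iff_dist_le_mul] at h1 h2 ⊢
  have key : ∀ x ∈ Icc a c, ∀ y ∈ Icc a c, x ≤ y → dist (f x) (f y) ≤ K * dist x y := by
    intro x hx y hy hxy
    rcases le_or_gt y b with hyb | hyb
    · exact h1 x ⟨hx.1, hxy.trans hyb⟩ y ⟨hy.1, hyb⟩
    rcases le_or_gt b x with hbx | hbx
    · exact h2 x ⟨hbx, hx.2⟩ y ⟨hbx.trans hxy, hy.2⟩
    · have e1 := h1 x ⟨hx.1, hbx.le⟩ b ⟨hab, le_refl _⟩
      have e2 := h2 b ⟨le_refl _, hbc⟩ y ⟨hyb.le, hy.2⟩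
      have d1 : dist x b = b - x := by rw [Real.dist_eq, abs_of_nonpos (by linarith)]; ring
      have d2 : dist b y = y - b := by rw [Real.dist_eq, abs_of_nonpos (by linarith)]; ring
      have d3 : dist x y = y - x := by rw [Real.dist_eq, abs_of_nonpos (by linarith)]; ring
      calc dist (f x) (f y) ≤ dist (f x) (f b) + dist (f b) (f y) := dist_triangle _ _ _
        _ ≤ K * dist x b + K * dist b y := add_le_add e1 e2
        _ = K * dist x y := by rw [d1, d2, d3]; ring
  intro x hx y hy
  rcases le_total x y with h | h
  · exact key x hx y hy h
  · rw [dist_comm, dist_comm x y]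
    exact key y hy x hx h

lemma chord_le (aa bb : ℝ) :
    (Real.cos aa - Real.cos bb) ^ 2 + (Real.sin aa - Real.sin bb) ^ 2 ≤ (aa - bb) ^ 2 := by
  have h := Real.one_sub_sq_div_two_le_cos (x := aa - bb)
  rw [Real.cos_sub] at h
  nlinarith [Real.sin_sq_add_cos_sq aa, Real.sin_sq_add_cos_sq bb]

lemma path_crossing {γ : ℝ → Euc 2} (hc : ContinuousOn (fun t => γ t 1) (Icc 0 1))
    (hsign : γ 0 1 * γ 1 1 < 0) : ∃ t ∈ Icc (0:ℝ) 1, γ t 1 = 0 := by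
  rcases lt_or_ge (γ 0 1) 0 with h0 | h0
  · have h1 : 0 < γ 1 1 := by nlinarith
    have := intermediate_value_Icc (zero_le_one' ℝ) hc
    have hm : (0:ℝ) ∈ Icc (γ 0 1) (γ 1 1) := ⟨h0.le, h1.le⟩
    obtain ⟨t, ht, hteq⟩ := this hm
    exact ⟨t, ht, hteq⟩
  · have h0' : 0 < γ 0 1 := by
      rcases lt_or_eq_of_le h0 with h | h
      · exact h
      · exfalso; rw [← h] at hsign; simp at hsign
    have h1 : γ 1 1 < 0 := by nlinarith
    have := intermediate_value_Icc' (zero_le_one' ℝ) hc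
    have hm : (0:ℝ) ∈ Icc (γ 1 1) (γ 0 1) := ⟨h1.le, h0'.le⟩
    obtain ⟨t, ht, hteq⟩ := this hm
    exact ⟨t, ht, hteq⟩

lemma no_short_crossing_path {D₀ : ℝ} {γ : ℝ → Euc 2}
    (hNT : IsNTPath slitDisc D₀ γ) (hlen : pathLen γ ≤ ENNReal.ofReal (1/4))
    (hx0 : 1/2 ≤ γ 0 0) (hsign : γ 0 1 * γ 1 1 < 0) : False := by
  have hcont : ContinuousOn (fun t => γ t 1) (Icc 0 1) :=
    (EuclideanSpace.proj (1 : Fin 2)).continuous.comp_continuousOn hNT.1.1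
  obtain ⟨t, ht, hteq⟩ := path_crossing hcont hsign
  have ht0 : t ≠ 0 := by
    intro h
    rw [h] at hteq
    rw [hteq] at hsign
    simp at hsign
  have hmem : γ t ∈ slitDisc := hNT.1.2.2 t ⟨lt_of_le_of_ne ht.1 (Ne.symm ht0), ht.2⟩
  rw [mem_slitDisc_iff] at hmem
  have habs : |γ t 0| ≤ ‖γ t‖ := abs_coord0_le_norm _
  have hlt1 : γ t 0 < 1 := by
    have := abs_le.1 habs
    linarith [hmem.1, this.2]
  have hneg : γ t 0 < 0 := by
    by_contra hge
    push_neg at hge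
    exact hmem.2 ⟨hteq, hge, hlt1.le⟩
  -- distance from γ 0 to γ t is > 1/2 but the path has length ≤ 1/4
  have hd : 1/2 < dist (γ 0) (γ t) := by
    have := abs_coord0_le_dist (γ 0) (γ t)
    have h2 : 1/2 < γ 0 0 - γ t 0 := by linarith
    calc (1:ℝ)/2 < γ 0 0 - γ t 0 := h2
      _ ≤ |γ 0 0 - γ t 0| := le_abs_self _
      _ ≤ dist (γ 0) (γ t) := this
  have hvar : edist (γ 0) (γ t) ≤ pathLen γ := by
    apply eVariationOn.edist_le γ (x := 0) (y := t)
    · exact ⟨le_refl _, zero_le_one⟩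
    · exact ht
  have : edist (γ 0) (γ t) ≤ ENNReal.ofReal (1/4) := hvar.trans hlen
  rw [edist_dist] at this
  have hle : dist (γ 0) (γ t) ≤ 1/4 :=
    (ENNReal.ofReal_le_ofReal_iff (by norm_num)).1 this
  linarith

theorem not_localJohn : ∀ D₀ : ℝ, 1 ≤ D₀ → ¬ LocalJohnWith slitDisc D₀ := by
  intro D₀ hD₀ h
  have hD₀pos : 0 < D₀ := lt_of_lt_of_le zero_lt_one hD₀
  set r : ℝ := 1 / (4 * D₀) with hrdef
  have hrpos : 0 < r := by positivity
  have hrle : r ≤ 1/4 := by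
    rw [hrdef]
    rw [div_le_div_iff₀ (by positivity) (by norm_num)]
    linarith
  have hx : pt 1 0 ∈ frontier slitDisc := slit_mem_frontier zero_le_one le_rfl
  have hdiam : ENNReal.ofReal r < EMetric.diam (frontier slitDisc) := by
    have h1 : pt (-1) 0 ∈ frontier slitDisc := by
      apply mem_frontier_of_norm_one
      have : ‖pt (-1) 0‖ ^ 2 = 1 := by rw [norm_sq]; simp
      nlinarith [norm_nonneg (pt (-1) 0)]
    have h2 : pt 1 0 ∈ frontier slitDisc := hx
    have hdist : dist (pt 1 0) (pt (-1) 0) = 2 := by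
      have : dist (pt 1 0) (pt (-1) 0) ^ 2 = 4 := by rw [dist_sq]; simp; norm_num
      nlinarith [dist_nonneg (x := pt 1 0) (y := pt (-1) 0)]
    calc ENNReal.ofReal r < ENNReal.ofReal 2 := by
          rw [ENNReal.ofReal_lt_ofReal_iff (by norm_num)]
          linarith
      _ = edist (pt 1 0) (pt (-1) 0) := by rw [edist_dist, hdist]
      _ ≤ EMetric.diam (frontier slitDisc) := EMetric.edist_le_diam_of_mem h2 h1
  obtain ⟨Y, hY, hball, hpaths⟩ := h (pt 1 0) hx r hrpos hdiam
  have hYd : Y ∈ slitDisc := hY.2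
  have hYball : dist Y (pt 1 0) < r := mem_ball.1 hY.1
  rw [mem_slitDisc_iff] at hYd
  have hY1ne : Y 1 ≠ 0 := by
    intro hY1
    apply hYd.2
    refine ⟨hY1, ?_, ?_⟩
    · have := abs_coord0_le_dist Y (pt 1 0)
      simp only [pt_apply0] at this
      have h' := abs_le.1 this
      linarith [hYball, hrle, h'.1, h'.2]
    · have := abs_coord0_le_norm Y
      have h' := abs_le.1 this
      linarith [hYd.1, h'.2]
  -- the boundary point z on the circle, on the opposite side of the slit from Y
  set α : ℝ := r / 2 with hαdef
  have hα0 : 0 < α := by positivity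
  have hα8 : α ≤ 1/8 := by rw [hαdef]; linarith
  have hαπ : α < Real.pi := by linarith [Real.pi_gt_three]
  have hsinα : 0 < Real.sin α := Real.sin_pos_of_pos_of_lt_pi hα0 hαπ
  have hcosα : 1/2 < Real.cos α := by
    have := Real.one_sub_sq_div_two_le_cos (x := α)
    nlinarith
  set sgn : ℝ := if 0 < Y 1 then -1 else 1 with hsgn
  set z : Euc 2 := pt (Real.cos α) (sgn * Real.sin α) with hz
  have hsgnabs : sgn ^ 2 = 1 := by rw [hsgn]; split_ifs <;> norm_num
  have hznorm : ‖z‖ = 1 := by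
    have : ‖z‖ ^ 2 = 1 := by
      rw [norm_sq, hz]
      simp only [pt_apply0, pt_apply1]
      have := Real.sin_sq_add_cos_sq α
      nlinarith
    nlinarith [norm_nonneg z]
  have hzfr : z ∈ frontier slitDisc := mem_frontier_of_norm_one hznorm
  have hzball : z ∈ ball (pt 1 0) r := by
    rw [mem_ball]
    have hle : dist z (pt 1 0) ≤ α := by
      apply dist_le_of_sq hα0.le
      rw [hz]
      simp only [pt_apply0, pt_apply1]
      have h1 := Real.one_sub_sq_div_two_le_cos (x := α)
      have h2 := Real.sin_sq_add_cos_sq α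
      have h3 := Real.cos_le_one α
      nlinarith
    linarith
  obtain ⟨γ, hNT, hγ0, hγ1, hlen⟩ := hpaths z ⟨hzball, hzfr⟩
  have hDr : D₀ * r = 1/4 := by
    rw [hrdef]; field_simp
  apply no_short_crossing_path hNT (by rwa [hDr] at hlen)
  · rw [hγ0, hz]; simp only [pt_apply0]; linarith
  · rw [hγ0, hγ1, hz]
    simp only [pt_apply1]
    rw [hsgn]
    split_ifs with hY1
    · have hp : 0 < Real.sin α * Y 1 := mul_pos hsinα hY1
      have he : -1 * Real.sin α * Y 1 = -(Real.sin α * Y 1) := by ring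
      rw [he]
      linarith
    · have hneg : Y 1 < 0 := lt_of_le_of_ne (not_lt.1 hY1) hY1ne
      have hp : Real.sin α * Y 1 < 0 := mul_neg_of_pos_of_neg hsinα hneg
      have he : 1 * Real.sin α * Y 1 = Real.sin α * Y 1 := by ring
      rw [he]
      linarith

lemma lipschitzOnWith_of_eqOn {f g : ℝ → Euc 2} {K : ℝ≥0} {s : Set ℝ}
    (h : LipschitzOnWith K f s) (he : ∀ x ∈ s, g x = f x) : LipschitzOnWith K g s := by
  intro x hx y hy
  rw [he x hx, he y hy]
  exact h hx hy

lemma lip_seg {Y v : Euc 2} {K : ℝ≥0} {c : ℝ} (h : |c| * ‖v‖ ≤ (K:ℝ)) :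
    LipschitzOnWith K (fun t : ℝ => Y + (c * t) • v) univ := by
  rw [lipschitzOnWith_iff_dist_le_mul]
  intro x _ y _
  have hsub : (Y + (c * x) • v) - (Y + (c * y) • v) = (c * (x - y)) • v := by module
  calc dist (Y + (c * x) • v) (Y + (c * y) • v) = ‖(c * (x - y)) • v‖ := by
        rw [dist_eq_norm, hsub]
    _ = |c| * |x - y| * ‖v‖ := by rw [norm_smul, Real.norm_eq_abs, abs_mul]
    _ ≤ (K:ℝ) * |x - y| := by
        nlinarith [abs_nonneg (x - y), abs_nonneg c, norm_nonneg v]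
    _ = (K:ℝ) * dist x y := by rw [Real.dist_eq]

/-- The John center `(0, -1/2)`. -/
def X₀ : Euc 2 := pt 0 (-(1/2))

lemma norm_X₀ : ‖X₀‖ = 1/2 := by
  have h : ‖X₀‖ ^ 2 = (1/2) ^ 2 := by rw [X₀, norm_sq]; norm_num
  nlinarith [norm_nonneg X₀]

lemma X₀_mem : X₀ ∈ slitDisc := by
  rw [mem_slitDisc_iff, X₀]
  constructor
  · rw [← X₀]; rw [norm_X₀]; norm_num
  · intro hc
    simp at hc

lemma johnA {Y : Euc 2} (hY : Y ∈ slitDisc) (hY1 : Y 1 ≤ 0) :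
    ∃ γ : ℝ → Euc 2, IsNTPath slitDisc 10 γ ∧ γ 0 = Y ∧ γ 1 = X₀ := by
  rw [mem_slitDisc_iff] at hY
  set v : Euc 2 := X₀ - Y with hv
  set γ : ℝ → Euc 2 := fun t => Y + ((1:ℝ) * t) • v with hγ
  have hvnorm : ‖v‖ ≤ 2 := by
    calc ‖v‖ ≤ ‖X₀‖ + ‖Y‖ := norm_sub_le _ _
      _ ≤ 1/2 + 1 := by rw [norm_X₀]; linarith [hY.1]
      _ ≤ 2 := by norm_num
  have hlip : LipschitzOnWith 2 γ univ := by
    apply lip_seg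
    rw [abs_one, one_mul]
    simpa using hvnorm
  -- the key ball estimate
  have hkey : ∀ t ∈ Icc (0:ℝ) 1, 0 < t → ∀ w : Euc 2, dist w (γ t) < t/4 → w ∈ slitDisc := by
    intro t ht htpos w hw
    have hγt : γ t = (1 - t) • Y + t • X₀ := by rw [hγ, hv]; simp only; module
    have hγt1 : γ t 1 ≤ -(t/2) := by
      rw [hγt]
      simp only [PiLp.add_apply, PiLp.smul_apply, smul_eq_mul]
      have hX1 : X₀ 1 = -(1/2) := by rw [X₀]; simp
      rw [hX1]
      nlinarith [mul_nonpos_of_nonneg_of_nonpos (by linarith [ht.2] : (0:ℝ) ≤ 1 - t) hY1]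
    have hw1 : w 1 < 0 := by
      have := abs_coord1_le_dist w (γ t)
      have h' := (abs_le.1 (this.trans hw.le)).2
      linarith
    have hwnorm : ‖w‖ < 1 := by
      have htri : ‖w‖ ≤ dist w (γ t) + ‖γ t‖ := by
        calc ‖w‖ = dist w 0 := (dist_zero_right w).symm
          _ ≤ dist w (γ t) + dist (γ t) 0 := dist_triangle _ _ _
          _ = dist w (γ t) + ‖γ t‖ := by rw [dist_zero_right]
      have hγnorm : ‖γ t‖ ≤ (1 - t) + t/2 := by
        rw [hγt]
        calc ‖(1 - t) • Y + t • X₀‖ ≤ ‖(1 - t) • Y‖ + ‖t • X₀‖ := norm_add_le _ _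
          _ = |1 - t| * ‖Y‖ + |t| * ‖X₀‖ := by rw [norm_smul, norm_smul]; simp [Real.norm_eq_abs]
          _ ≤ (1 - t) + t/2 := by
              rw [abs_of_nonneg (by linarith [ht.2]), abs_of_nonneg ht.1, norm_X₀]
              nlinarith [mul_le_mul_of_nonneg_left hY.1.le (by linarith [ht.2] : (0:ℝ) ≤ 1 - t),
                norm_nonneg X₀, ht.1]
      linarith
    rw [mem_slitDisc_iff]
    exact ⟨hwnorm, fun hc => by linarith [hc.1 ▸ hw1]⟩
  have hmem : ∀ t ∈ Icc (0:ℝ) 1, γ t ∈ slitDisc := by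
    intro t ht
    rcases eq_or_lt_of_le ht.1 with h | h
    · have : γ 0 = Y := by rw [hγ]; simp
      rw [← h, this]
      rw [mem_slitDisc_iff]
      exact hY
    · exact hkey t ht h (γ t) (by rw [dist_self]; linarith)
  have hδ : ∀ t ∈ Icc (0:ℝ) 1, t/4 ≤ infDist (γ t) (frontier slitDisc) := by
    intro t ht
    rcases eq_or_lt_of_le ht.1 with h | h
    · rw [← h]; simpa using infDist_nonneg
    · exact infDist_frontier_ge (hkey t ht h)
  refine ⟨γ, ⟨⟨hlip.continuousOn.mono (subset_univ _), fun t ht => subset_closure (hmem t ht),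
      fun t ht => hmem t ⟨ht.1.le, ht.2⟩⟩, ?_⟩, by rw [hγ]; simp,
    show Y + ((1:ℝ) * 1) • (X₀ - Y) = X₀ by module⟩
  intro t ht
  have hvar : eVariationOn γ (Icc 0 t) ≤ ENNReal.ofReal (2 * t) := by
    have := eVar_le_of_lipschitz (γ := γ) (K := 2) (t := t) (hlip.mono (subset_univ _))
    simpa using this
  refine hvar.trans (ENNReal.ofReal_le_ofReal ?_)
  have := hδ t ht
  linarith [ht.1]

set_option maxHeartbeats 1000000 in
lemma johnB {Y : Euc 2} (hY : Y ∈ slitDisc) (hY1 : 0 < Y 1) :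
    ∃ γ : ℝ → Euc 2, IsNTPath slitDisc 10 γ ∧ γ 0 = Y ∧ γ 1 = X₀ := by
  rw [mem_slitDisc_iff] at hY
  set c₁ : Euc 2 := pt 0 (1/2) with hc₁
  have hnormc₁ : ‖c₁‖ = 1/2 := by
    have h : ‖c₁‖ ^ 2 = (1/2) ^ 2 := by rw [hc₁, norm_sq]; norm_num
    nlinarith [norm_nonneg c₁]
  set θ : ℝ → ℝ := fun t => Real.pi/2 + (2*t - 1)*Real.pi with hθdef
  set seg : ℝ → Euc 2 := fun t => Y + (2 * t) • (c₁ - Y) with hseg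
  set arc : ℝ → Euc 2 := fun t => (1/2 : ℝ) • pt (Real.cos (θ t)) (Real.sin (θ t)) with harc
  set γ : ℝ → Euc 2 := fun t => if t ≤ 1/2 then seg t else arc t with hγ
  have harc0 : ∀ t, arc t 0 = Real.cos (θ t) / 2 := by
    intro t
    rw [harc]
    simp only [PiLp.smul_apply, pt_apply0, smul_eq_mul]
    ring
  have harc1 : ∀ t, arc t 1 = Real.sin (θ t) / 2 := by
    intro t
    rw [harc]
    simp only [PiLp.smul_apply, pt_apply1, smul_eq_mul]
    ring
  have hseg_lip : LipschitzOnWith 4 seg univ := by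
    apply lip_seg
    have : ‖c₁ - Y‖ ≤ 3/2 := by
      calc ‖c₁ - Y‖ ≤ ‖c₁‖ + ‖Y‖ := norm_sub_le _ _
        _ ≤ 3/2 := by rw [hnormc₁]; linarith [hY.1]
    rw [abs_two]
    push_cast
    linarith
  have harc_lip : LipschitzOnWith 4 arc univ := by
    rw [lipschitzOnWith_iff_dist_le_mul]
    intro x _ y _
    have hr : (0:ℝ) ≤ 4 * |x - y| := by positivity
    have hd : dist (arc x) (arc y) ≤ 4 * |x - y| := by
      apply dist_le_of_sq hr
      rw [harc0, harc0, harc1, harc1]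
      have hθxy : θ x - θ y = 2 * Real.pi * (x - y) := by rw [hθdef]; ring
      have hch := chord_le (θ x) (θ y)
      have hπ4 := Real.pi_lt_four
      have hπ0 := Real.pi_pos
      have h1 : (θ x - θ y) ^ 2 = 4 * Real.pi ^ 2 * (x - y) ^ 2 := by rw [hθxy]; ring
      have h2 : (4 * |x - y|) ^ 2 = 16 * (x - y) ^ 2 := by
        rw [mul_pow, sq_abs]; norm_num
      rw [h2]
      have hπ2 : Real.pi ^ 2 < 16 := by nlinarith
      nlinarith [sq_nonneg (x - y), mul_le_mul_of_nonneg_right hπ2.le (sq_nonneg (x - y))]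
    calc dist (arc x) (arc y) ≤ 4 * |x - y| := hd
      _ = (4:ℝ≥0) * dist x y := by rw [Real.dist_eq]; norm_num
  have hseg_half : seg (1/2) = c₁ := by
    rw [hseg]
    show Y + ((2:ℝ) * (1/2)) • (c₁ - Y) = c₁
    module
  have harc_half : arc (1/2) = c₁ := by
    have hθh : θ (1/2) = Real.pi / 2 := by rw [hθdef]; ring
    apply euc_ext
    · rw [harc0, hθh, Real.cos_pi_div_two, hc₁]; simp
    · rw [harc1, hθh, Real.sin_pi_div_two, hc₁]; simp
  have heq1 : ∀ t ∈ Icc (0:ℝ) (1/2), γ t = seg t := by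
    intro t ht
    rw [hγ]
    simp only [if_pos ht.2]
  have heq2 : ∀ t ∈ Icc (1/2:ℝ) 1, γ t = arc t := by
    intro t ht
    rw [hγ]
    simp only
    split_ifs with h
    · have : t = 1/2 := le_antisymm h ht.1
      rw [this, hseg_half, harc_half]
    · rfl
  have hlip : LipschitzOnWith 4 γ (Icc 0 1) := by
    apply lipschitzOnWith_glue (by norm_num : (0:ℝ) ≤ 1/2) (by norm_num : (1/2:ℝ) ≤ 1)
    · exact lipschitzOnWith_of_eqOn (hseg_lip.mono (subset_univ _)) heq1
    · exact lipschitzOnWith_of_eqOn (harc_lip.mono (subset_univ _)) heq2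
  -- ball estimates
  have hkey1 : ∀ t, 0 < t → t ≤ 1/2 → ∀ w : Euc 2, dist w (seg t) < t/2 → w ∈ slitDisc := by
    intro t htpos ht2 w hw
    have hZ : seg t = (1 - 2*t) • Y + (2*t) • c₁ := by rw [hseg]; module
    have hc₁1 : c₁ 1 = 1/2 := by rw [hc₁]; simp
    have hZ1 : t ≤ seg t 1 := by
      rw [hZ]
      simp only [PiLp.add_apply, PiLp.smul_apply, smul_eq_mul, hc₁1]
      nlinarith [mul_nonneg (by linarith : (0:ℝ) ≤ 1 - 2*t) hY1.le]
    have hw1 : 0 < w 1 := by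
      have := abs_coord1_le_dist w (seg t)
      have h' := (abs_le.1 (this.trans hw.le)).1
      linarith
    have hwnorm : ‖w‖ < 1 := by
      have hZnorm : ‖seg t‖ ≤ 1 - t := by
        rw [hZ]
        calc ‖(1 - 2*t) • Y + (2*t) • c₁‖ ≤ ‖(1 - 2*t) • Y‖ + ‖(2*t) • c₁‖ := norm_add_le _ _
          _ = |1 - 2*t| * ‖Y‖ + |2*t| * ‖c₁‖ := by
              rw [norm_smul, norm_smul, Real.norm_eq_abs, Real.norm_eq_abs]
          _ ≤ 1 - t := by
              rw [abs_of_nonneg (by linarith), abs_of_nonneg (by linarith), hnormc₁]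
              nlinarith [mul_le_mul_of_nonneg_left hY.1.le (by linarith : (0:ℝ) ≤ 1 - 2*t)]
      calc ‖w‖ = dist w 0 := (dist_zero_right w).symm
        _ ≤ dist w (seg t) + dist (seg t) 0 := dist_triangle _ _ _
        _ < t/2 + (1 - t) := by rw [dist_zero_right]; linarith
        _ ≤ 1 := by linarith
    rw [mem_slitDisc_iff]
    exact ⟨hwnorm, fun hc => by linarith [hc.1 ▸ hw1]⟩
  have hkey2 : ∀ t, 1/2 ≤ t → t ≤ 1 → ∀ w : Euc 2, dist w (arc t) < 1/2 → w ∈ slitDisc := by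
    intro t ht1 ht2 w hw
    have hπ0 := Real.pi_pos
    have hθt : θ t = Real.pi/2 + (2*t - 1)*Real.pi := rfl
    have hθlo : Real.pi / 2 ≤ θ t := by
      rw [hθt]
      nlinarith
    have hθhi : θ t ≤ Real.pi + Real.pi / 2 := by
      rw [hθt]
      nlinarith
    have hcos : Real.cos (θ t) ≤ 0 := Real.cos_nonpos_of_pi_div_two_le_of_le hθlo hθhi
    have hsc := Real.sin_sq_add_cos_sq (θ t)
    have hPnorm : ‖arc t‖ = 1/2 := by
      have h : ‖arc t‖ ^ 2 = (1/2)^2 := by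
        rw [norm_sq, harc0, harc1]
        nlinarith
      nlinarith [norm_nonneg (arc t)]
    have hwnorm : ‖w‖ < 1 := by
      calc ‖w‖ = dist w 0 := (dist_zero_right w).symm
        _ ≤ dist w (arc t) + dist (arc t) 0 := dist_triangle _ _ _
        _ < 1/2 + 1/2 := by rw [dist_zero_right, hPnorm]; linarith
        _ = 1 := by norm_num
    rw [mem_slitDisc_iff]
    refine ⟨hwnorm, fun hc => ?_⟩
    obtain ⟨hw1, hw0, _⟩ := hc
    have hds := dist_sq w (arc t)
    rw [harc0, harc1, hw1] at hds
    have hdlt : dist w (arc t) ^ 2 < (1/2)^2 := by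
      nlinarith [dist_nonneg (x := w) (y := arc t)]
    rw [hds] at hdlt
    nlinarith [mul_nonneg hw0 (neg_nonneg.2 hcos), sq_nonneg (w 0)]
  have hmem : ∀ t ∈ Icc (0:ℝ) 1, γ t ∈ slitDisc := by
    intro t ht
    rcases le_or_gt t (1/2) with h | h
    · rw [heq1 t ⟨ht.1, h⟩]
      rcases eq_or_lt_of_le ht.1 with h0 | h0
      · have : seg 0 = Y := by rw [hseg]; simp
        rw [← h0, this, mem_slitDisc_iff]
        exact hY
      · exact hkey1 t h0 h (seg t) (by rw [dist_self]; linarith)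
    · rw [heq2 t ⟨h.le, ht.2⟩]
      exact hkey2 t h.le ht.2 (arc t) (by rw [dist_self]; norm_num)
  have hδ : ∀ t ∈ Icc (0:ℝ) 1, 4 * t ≤ 10 * infDist (γ t) (frontier slitDisc) := by
    intro t ht
    rcases le_or_gt t (1/2) with h | h
    · rcases eq_or_lt_of_le ht.1 with h0 | h0
      · rw [← h0]
        simpa using mul_nonneg (by norm_num : (0:ℝ) ≤ 10) infDist_nonneg
      · have : t/2 ≤ infDist (γ t) (frontier slitDisc) := by
          rw [heq1 t ⟨ht.1, h⟩]
          exact infDist_frontier_ge (hkey1 t h0 h)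
        linarith
    · have : 1/2 ≤ infDist (γ t) (frontier slitDisc) := by
        rw [heq2 t ⟨h.le, ht.2⟩]
        exact infDist_frontier_ge (hkey2 t h.le ht.2)
      linarith [ht.2]
  have hγ0 : γ 0 = Y := by
    rw [hγ]
    simp only [if_pos (by norm_num : (0:ℝ) ≤ 1/2)]
    rw [hseg]
    simp
  have hγ1 : γ 1 = X₀ := by
    rw [hγ]
    simp only [if_neg (by norm_num : ¬ (1:ℝ) ≤ 1/2)]
    have hθ1 : θ 1 = Real.pi / 2 + Real.pi := by rw [hθdef]; ring
    have hcos1 : Real.cos (θ 1) = 0 := by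
      rw [hθ1, Real.cos_add, Real.cos_pi_div_two, Real.sin_pi_div_two, Real.cos_pi, Real.sin_pi]
      ring
    have hsin1 : Real.sin (θ 1) = -1 := by
      rw [hθ1, Real.sin_add, Real.cos_pi_div_two, Real.sin_pi_div_two, Real.cos_pi, Real.sin_pi]
      ring
    apply euc_ext
    · rw [harc0, hcos1, X₀]; simp
    · rw [harc1, hsin1, X₀]; simp; norm_num
  refine ⟨γ, ⟨⟨hlip.continuousOn, fun t ht => subset_closure (hmem t ht),
      fun t ht => hmem t ⟨ht.1.le, ht.2⟩⟩, ?_⟩, hγ0, hγ1⟩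
  intro t ht
  have hvar : eVariationOn γ (Icc 0 t) ≤ ENNReal.ofReal (4 * t) := by
    have := eVar_le_of_lipschitz (γ := γ) (K := 4) (t := t)
      (hlip.mono (Icc_subset_Icc le_rfl ht.2))
    simpa using this
  exact hvar.trans (ENNReal.ofReal_le_ofReal (hδ t ht))

end SlitAux

/-- **Example 3.3 (1).** The slit disc satisfies the John condition (with John point
`X₀ = (0,-1/2)`) but not the local John condition for any `D₀ ≥ 1`. -/
theorem slitDisc_john_not_localJohn :
    (∃ D₀ : ℝ, 1 ≤ D₀ ∧ ∃ X₀ ∈ slitDisc,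
      X₀ = (-(1 / 2) : ℝ) • EuclideanSpace.single (1 : Fin 2) (1 : ℝ) ∧
      ∀ Y ∈ slitDisc, ∃ γ : ℝ → Euc 2, IsNTPath slitDisc D₀ γ ∧ γ 0 = Y ∧ γ 1 = X₀) ∧
    ∀ D₀ : ℝ, 1 ≤ D₀ → ¬ LocalJohnWith slitDisc D₀ := by
  constructor
  · refine ⟨10, by norm_num, SlitAux.X₀, SlitAux.X₀_mem, ?_, ?_⟩
    · apply SlitAux.euc_ext
      · simp [SlitAux.X₀, PiLp.smul_apply, EuclideanSpace.single_apply]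
      · simp [SlitAux.X₀, PiLp.smul_apply, EuclideanSpace.single_apply]
    · intro Y hY
      rcases le_or_gt (Y 1) 0 with h | h
      · exact SlitAux.johnA hY h
      · exact SlitAux.johnB hY h
  · exact SlitAux.not_localJohn
end
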